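/- Monotonicity of amlsbound: let α > 1 be real. (i) If 1 < c < c′ and γ, γ′ are reals with 1 < γ < 1 + (c−1)/α, D(1/α ‖ (γ−1)/(c−1)) = ln(c)/α, 1 < γ′ < 1 + (c′−1)/α and D(1/α ‖ (γ′−1)/(c′−1)) = ln(c′)/α, then γ < γ′. (ii) If c > 1 is real and 1 < α < α′, and γ, γ′ are reals with 1 < γ < 1 + (c−1)/α, D(1/α ‖ (γ−1)/(c−1)) = ln(c)/α, 1 < γ′ < 1 + (c−1)/α′ and D(1/α′ ‖ (γ′−1)/(c−1)) = ln(c)/α′, then γ′ < γ. -/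

import Mathlib

/-- Kullback–Leibler divergence `D(a‖b) = a·ln(a/b) + (1−a)·ln((1−a)/(1−b))`.
(The convention `0·ln 0 = 0` holds automatically since `Real.log 0 = 0`.) -/
noncomputable def klDiv (a b : ℝ) : ℝ :=
  a * Real.log (a / b) + (1 - a) * Real.log ((1 - a) / (1 - b))

noncomputable def phi (a b : ℝ) : ℝ :=
  Real.log a - Real.log b + ((1 - a) / a) * (Real.log (1 - a) - Real.log (1 - b))

lemma klDiv_eq_phi {a b : ℝ} (ha0 : 0 < a) (ha1 : a < 1) (hb0 : 0 < b) (hb1 : b < 1) :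
    klDiv a b = a * phi a b := by
  unfold klDiv phi
  rw [Real.log_div ha0.ne' hb0.ne',
    Real.log_div (by linarith : (1:ℝ) - a ≠ 0) (by linarith : (1:ℝ) - b ≠ 0)]
  field_simp

lemma hasDerivAt_phi_b (a : ℝ) {b : ℝ} (hb0 : 0 < b) (hb1 : b < 1) :
    HasDerivAt (fun x => phi a x) (-(1/b) + ((1-a)/a) * (1/(1-b))) b := by
  have h1 : HasDerivAt (fun x : ℝ => Real.log x) (1/b) b := by
    simpa [one_div] using Real.hasDerivAt_log hb0.ne'
  have h2 : HasDerivAt (fun x : ℝ => Real.log (1 - x)) (-(1/(1-b))) b := by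
    have := (Real.hasDerivAt_log (by linarith : (1:ℝ) - b ≠ 0)).comp b
      ((hasDerivAt_id b).const_sub 1)
    exact this.congr_deriv (by ring)
  have hA := h1.const_sub (Real.log a)
  have hB := (h2.const_sub (Real.log (1-a))).const_mul ((1-a)/a)
  have := hA.add hB
  exact this.congr_deriv (by ring)

lemma phi_strictAntiOn {a : ℝ} (ha0 : 0 < a) (ha1 : a < 1) :
    StrictAntiOn (fun x => phi a x) (Set.Ioo 0 a) := by
  apply strictAntiOn_of_deriv_neg (convex_Ioo 0 a)
  · intro x hx
    exact (hasDerivAt_phi_b a hx.1 (hx.2.trans ha1)).continuousAt.continuousWithinAt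
  · intro x hx
    rw [interior_Ioo] at hx
    rw [(hasDerivAt_phi_b a hx.1 (hx.2.trans ha1)).deriv]
    have hx1 : x < 1 := hx.2.trans ha1
    have : ((1-a)/a) * (1/(1-x)) < 1/x := by
      rw [div_mul_div_comm, mul_one, div_lt_div_iff₀ (by nlinarith [hx.2]) hx.1]
      nlinarith [hx.2]
    linarith

noncomputable def psi (a b : ℝ) : ℝ := b * (Real.exp (phi a b) - 1)

lemma hasDerivAt_psi {a b : ℝ} (hb0 : 0 < b) (hb1 : b < 1) (ha0 : 0 < a) :
    HasDerivAt (fun x => psi a x)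
      (Real.exp (phi a b) * (b * (1-a) / (a * (1-b))) - 1) b := by
  have hphi := hasDerivAt_phi_b a hb0 hb1
  have := (hasDerivAt_id b).mul (hphi.exp.sub_const 1)
  have h1 : b ≠ 0 := hb0.ne'
  have h2 : (1:ℝ) - b ≠ 0 := by linarith
  exact this.congr_deriv (by simp only [id]; field_simp; ring)

lemma psi_strictAntiOn {a : ℝ} (ha0 : 0 < a) (ha1 : a < 1) :
    StrictAntiOn (fun x => psi a x) (Set.Ioo 0 a) := by
  apply strictAntiOn_of_deriv_neg (convex_Ioo 0 a)
  · intro x hx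
    exact (hasDerivAt_psi hx.1 (hx.2.trans ha1) ha0).continuousAt.continuousWithinAt
  · intro x hx
    rw [interior_Ioo] at hx
    have hx1 : x < 1 := hx.2.trans ha1
    rw [(hasDerivAt_psi hx.1 hx1 ha0).deriv]
    have ha' : (0:ℝ) < 1 - a := by linarith
    have hx' : (0:ℝ) < 1 - x := by linarith
    have hpos : 0 < x * (1-a) / (a * (1-x)) :=
      div_pos (mul_pos hx.1 ha') (mul_pos ha0 hx')
    have key : Real.exp (phi a x) * (x * (1-a) / (a * (1-x))) < 1 := by
      rw [← Real.exp_log hpos, ← Real.exp_add]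
      apply Real.exp_lt_one_iff.mpr
      rw [Real.log_div (mul_pos hx.1 ha').ne' (mul_pos ha0 hx').ne',
        Real.log_mul hx.1.ne' (by linarith : (1:ℝ) - a ≠ 0),
        Real.log_mul ha0.ne' (by linarith : (1:ℝ) - x ≠ 0)]
      have hL : Real.log (1-a) < Real.log (1-x) :=
        Real.log_lt_log (by linarith) (by linarith [hx.2])
      have : phi a x + (Real.log x + Real.log (1-a) - (Real.log a + Real.log (1-x)))
          = (Real.log (1-a) - Real.log (1-x)) / a := by
        unfold phi; field_simp; ring
      rw [this]
      apply div_neg_of_neg_of_pos <;> linarith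
    linarith

lemma hasDerivAt_phi_a {b x : ℝ} (hx0 : 0 < x) (hx1 : x < 1) :
    HasDerivAt (fun y => phi y b)
      ((Real.log (1-b) - Real.log (1-x)) / x^2) x := by
  have h1 : HasDerivAt (fun y : ℝ => Real.log y) (1/x) x := by
    simpa [one_div] using Real.hasDerivAt_log hx0.ne'
  have h2 : HasDerivAt (fun y : ℝ => Real.log (1 - y)) (-(1/(1-x))) x := by
    have := (Real.hasDerivAt_log (by linarith : (1:ℝ) - x ≠ 0)).comp x
      ((hasDerivAt_id x).const_sub 1)
    exact this.congr_deriv (by ring)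
  have hu : HasDerivAt (fun y : ℝ => (1 - y)/y)
      (((-1) * x - (1 - x) * 1) / x^2) x :=
    ((hasDerivAt_id x).const_sub 1).div (hasDerivAt_id x) hx0.ne'
  have hv := h2.sub_const (Real.log (1-b))
  have := (h1.sub_const (Real.log b)).add (hu.mul hv)
  have h3 : x ≠ 0 := hx0.ne'
  have h4 : (1:ℝ) - x ≠ 0 := by linarith
  exact this.congr_deriv (by field_simp; ring)

lemma phi_strictMonoOn_a {b : ℝ} (hb0 : 0 < b) (hb1 : b < 1) :
    StrictMonoOn (fun y => phi y b) (Set.Ioo b 1) := by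
  apply strictMonoOn_of_deriv_pos (convex_Ioo b 1)
  · intro x hx
    exact (hasDerivAt_phi_a (hb0.trans hx.1) hx.2).continuousAt.continuousWithinAt
  · intro x hx
    rw [interior_Ioo] at hx
    rw [(hasDerivAt_phi_a (hb0.trans hx.1) hx.2).deriv]
    have h : Real.log (1-x) < Real.log (1-b) :=
      Real.log_lt_log (by linarith [hx.2]) (by linarith [hx.1, hx.2])
    have hx0 : 0 < x := hb0.trans hx.1
    exact div_pos (by linarith) (by positivity)

lemma setup {α c γ : ℝ} (hα : 1 < α) (hc : 1 < c) (hγ1 : 1 < γ)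
    (hγ2 : γ < 1 + (c-1)/α)
    (heq : klDiv (1/α) ((γ-1)/(c-1)) = Real.log c / α) :
    0 < (γ-1)/(c-1) ∧ (γ-1)/(c-1) < 1/α ∧
      phi (1/α) ((γ-1)/(c-1)) = Real.log c ∧ γ - 1 = ((γ-1)/(c-1)) * (c-1) := by
  have hc1 : (0:ℝ) < c - 1 := by linarith
  have hα0 : (0:ℝ) < α := by linarith
  have hb0 : 0 < (γ-1)/(c-1) := div_pos (by linarith) hc1
  have hstep : (γ-1) * α < c - 1 := by
    have h1 : γ - 1 < (c-1)/α := by linarith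
    exact (lt_div_iff₀ hα0).mp h1
  have hba : (γ-1)/(c-1) < 1/α := by
    rw [div_lt_div_iff₀ hc1 hα0]; linarith
  have ha0 : 0 < 1/α := by positivity
  have ha1 : 1/α < 1 := by rw [div_lt_one hα0]; exact hα
  have hb1 : (γ-1)/(c-1) < 1 := hba.trans ha1
  have hkl : klDiv (1/α) ((γ-1)/(c-1)) = (1/α) * phi (1/α) ((γ-1)/(c-1)) :=
    klDiv_eq_phi ha0 ha1 hb0 hb1
  refine ⟨hb0, hba, ?_, ?_⟩
  · have : (1/α) * phi (1/α) ((γ-1)/(c-1)) = (1/α) * Real.log c := by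
      rw [← hkl, heq]; ring
    exact mul_left_cancel₀ (by positivity) this
  · rw [div_mul_cancel₀ _ hc1.ne']

/-- Monotonicity of `amlsbound`: for fixed `α > 1` the implicitly defined quantity is
strictly increasing in `c`, and for fixed `c > 1` it is strictly decreasing in `α`. -/
theorem stmt5 (α : ℝ) (hα : 1 < α) :
    (∀ c c' γ γ' : ℝ, 1 < c → c < c' →
      1 < γ → γ < 1 + (c - 1) / α →
      klDiv (1 / α) ((γ - 1) / (c - 1)) = Real.log c / α →
      1 < γ' → γ' < 1 + (c' - 1) / α →
      klDiv (1 / α) ((γ' - 1) / (c' - 1)) = Real.log c' / α →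
      γ < γ') ∧
    (∀ c α' γ γ' : ℝ, 1 < c → α < α' →
      1 < γ → γ < 1 + (c - 1) / α →
      klDiv (1 / α) ((γ - 1) / (c - 1)) = Real.log c / α →
      1 < γ' → γ' < 1 + (c - 1) / α' →
      klDiv (1 / α') ((γ' - 1) / (c - 1)) = Real.log c / α' →
      γ' < γ) := by
  have hα0 : (0:ℝ) < α := by linarith
  have ha0 : 0 < 1/α := by positivity
  have ha1 : 1/α < 1 := by rw [div_lt_one hα0]; exact hα
  constructor
  · intro c c' γ γ' hc hcc hγ1 hγ2 heq hγ'1 hγ'2 heq'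
    obtain ⟨hb0, hba, hphi, hbg⟩ := setup hα hc hγ1 hγ2 heq
    obtain ⟨hb'0, hb'a, hphi', hbg'⟩ := setup hα (hc.trans hcc) hγ'1 hγ'2 heq'
    set a : ℝ := 1/α with ha_def
    set b : ℝ := (γ-1)/(c-1) with hb_def
    set b' : ℝ := (γ'-1)/(c'-1) with hb'_def
    have hbmem : b ∈ Set.Ioo 0 a := ⟨hb0, hba⟩
    have hb'mem : b' ∈ Set.Ioo 0 a := ⟨hb'0, hb'a⟩
    have hlogcc : Real.log c < Real.log c' := Real.log_lt_log (by linarith) hcc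
    have hlt : b' < b := by
      by_contra h
      push_neg at h
      rcases eq_or_lt_of_le h with he | h2
      · rw [he, hphi'] at hphi; linarith
      · have key : phi a b' < phi a b := phi_strictAntiOn ha0 ha1 hbmem hb'mem h2
        rw [hphi, hphi'] at key; linarith
    have hψ : psi a b < psi a b' := psi_strictAntiOn ha0 ha1 hb'mem hbmem hlt
    have hec : Real.exp (phi a b) = c := by rw [hphi]; exact Real.exp_log (by linarith)
    have hec' : Real.exp (phi a b') = c' := by rw [hphi']; exact Real.exp_log (by linarith)
    unfold psi at hψ
    rw [hec, hec'] at hψ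
    nlinarith [hψ, hbg, hbg']
  · intro c α' γ γ' hc hαα hγ1 hγ2 heq hγ'1 hγ'2 heq'
    have hα' : 1 < α' := hα.trans hαα
    have hα'0 : (0:ℝ) < α' := by linarith
    obtain ⟨hb0, hba, hphi, hbg⟩ := setup hα hc hγ1 hγ2 heq
    obtain ⟨hb'0, hb'a', hphi', hbg'⟩ := setup hα' hc hγ'1 hγ'2 heq'
    set a : ℝ := 1/α with ha_def
    set a' : ℝ := 1/α' with ha'_def
    set b : ℝ := (γ-1)/(c-1) with hb_def
    set b' : ℝ := (γ'-1)/(c-1) with hb'_def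
    have haa : a' < a := one_div_lt_one_div_of_lt hα0 hαα
    have ha'0 : 0 < a' := by positivity
    have ha'1 : a' < 1 := haa.trans ha1
    have hb'1 : b' < 1 := hb'a'.trans ha'1
    have hb'a : b' < a := hb'a'.trans haa
    have hmono : phi a' b' < phi a b' :=
      phi_strictMonoOn_a hb'0 hb'1 ⟨hb'a', ha'1⟩ ⟨hb'a, ha1⟩ haa
    rw [hphi'] at hmono
    have hbmemA : b ∈ Set.Ioo 0 a := ⟨hb0, hba⟩
    have hb'memA : b' ∈ Set.Ioo 0 a := ⟨hb'0, hb'a⟩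
    have hlt : b' < b := by
      by_contra h
      push_neg at h
      rcases eq_or_lt_of_le h with he | h2
      · rw [he] at hphi; linarith
      · have key : phi a b' < phi a b := phi_strictAntiOn ha0 ha1 hbmemA hb'memA h2
        rw [hphi] at key; linarith
    nlinarith [hbg, hbg', mul_lt_mul_of_pos_right hlt (show (0:ℝ) < c - 1 by linarith)]
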